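/- Let K and L be convex bodies in ℝⁿ and let C ⊂ ℝⁿ × ℝⁿ be the convex hull of (K × {0}) ∪ ({0} × L). If both K and L contain the origin, then the intersection of C with the diagonal subspace E = {(x, x) : x ∈ ℝⁿ} equals {(x, x) : x ∈ (K° + L°)°}, where A° = {y ∈ ℝⁿ : ⟨x, y⟩ ≤ 1 for all x ∈ A} is the polar body. -/

import Mathlib

open MeasureTheory Set Pointwise
open scoped RealInnerProductSpace

/-- The polar body of a set `A ⊆ ℝⁿ`: all `y` with `⟪x, y⟫ ≤ 1` for every `x ∈ A`. -/
def polarBody {n : ℕ} (A : Set (EuclideanSpace ℝ (Fin n))) :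
    Set (EuclideanSpace ℝ (Fin n)) :=
  {y | ∀ x ∈ A, ⟪x, y⟫ ≤ 1}

lemma zero_mem_polarBody {n : ℕ} (A : Set (EuclideanSpace ℝ (Fin n))) :
    (0 : EuclideanSpace ℝ (Fin n)) ∈ polarBody A := by
  intro x _
  simp [polarBody]

/-- Separation: if `x ∉ r • K` for a closed convex `K` containing `0` and `r > 0`,
then some element of the polar body has inner product with `x` exceeding `r`. -/
lemma polar_sep {n : ℕ} {K : Set (EuclideanSpace ℝ (Fin n))}
    (hK_conv : Convex ℝ K) (hK_closed : IsClosed K)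
    (hK0 : (0 : EuclideanSpace ℝ (Fin n)) ∈ K)
    {x : EuclideanSpace ℝ (Fin n)} {r : ℝ} (hr : 0 < r) (hx : x ∉ r • K) :
    ∃ u ∈ polarBody K, r < ⟪u, x⟫ := by
  have hconv : Convex ℝ (r • K) := hK_conv.smul r
  have hclosed : IsClosed (r • K) := hK_closed.smul_of_ne_zero hr.ne'
  obtain ⟨f, c, hfs, hfx⟩ := geometric_hahn_banach_closed_point hconv hclosed hx
  have h0 : (0 : EuclideanSpace ℝ (Fin n)) ∈ r • K := ⟨0, hK0, smul_zero r⟩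
  have hc : 0 < c := by simpa using hfs 0 h0
  set v : EuclideanSpace ℝ (Fin n) :=
    (InnerProductSpace.toDual ℝ (EuclideanSpace ℝ (Fin n))).symm f with hv
  have hvf : ∀ y, ⟪v, y⟫ = f y := fun y => InnerProductSpace.toDual_symm_apply
  refine ⟨(r / c) • v, ?_, ?_⟩
  · intro k hk
    have hk' : f (r • k) < c := hfs _ ⟨k, hk, rfl⟩
    rw [f.map_smul, smul_eq_mul] at hk'
    have : ⟪k, (r / c) • v⟫ = (r / c) * f k := by
      rw [real_inner_smul_right, real_inner_comm, hvf]
    rw [this]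
    rw [div_mul_eq_mul_div, div_le_one hc]
    linarith
  · have : ⟪(r / c) • v, x⟫ = (r / c) * f x := by rw [real_inner_smul_left, hvf]
    rw [this]
    have h1 : r / c * c < r / c * f x := by
      apply mul_lt_mul_of_pos_left hfx (by positivity)
    rw [div_mul_cancel₀ _ hc.ne'] at h1
    linarith

/-- Closedness limit: if `x ∈ t • K` for every `t > a` and `0 < r`, `a ≤ r`, `K` closed,
then `x ∈ r • K`. -/
lemma mem_smul_of_forall_gt {n : ℕ} {K : Set (EuclideanSpace ℝ (Fin n))}
    (hK_closed : IsClosed K) {x : EuclideanSpace ℝ (Fin n)} {a r : ℝ}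
    (hr : 0 < r) (har : a ≤ r) (H : ∀ t, a < t → x ∈ t • K) : x ∈ r • K := by
  rw [mem_smul_set_iff_inv_smul_mem₀ hr.ne']
  have hmem : ∀ t : ℝ, 1 < t → (t * r)⁻¹ • x ∈ K := by
    intro t ht
    have htr : 0 < t * r := by nlinarith
    have := H (t * r) (by nlinarith)
    rwa [mem_smul_set_iff_inv_smul_mem₀ htr.ne'] at this
  have hcont : Filter.Tendsto (fun t : ℝ => (t * r)⁻¹ • x) (nhdsWithin 1 (Set.Ioi 1))
      (nhds (r⁻¹ • x)) := by
    have h1 : ContinuousAt (fun t : ℝ => (t * r)⁻¹ • x) 1 := by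
      have : ContinuousAt (fun t : ℝ => (t * r)⁻¹) 1 :=
        ((continuousAt_id.mul continuousAt_const).inv₀ (by simp [hr.ne']))
      exact this.smul continuousAt_const
    have := h1.continuousWithinAt (s := Set.Ioi 1)
    simpa using this.tendsto
  refine hK_closed.mem_of_tendsto hcont ?_
  filter_upwards [self_mem_nhdsWithin] with t ht
  exact hmem t ht

theorem diag_section_conv_hull_prod (n : ℕ)
    (K L : Set (EuclideanSpace ℝ (Fin n)))
    (hK_compact : IsCompact K) (hK_conv : Convex ℝ K)
    (hK_int : (interior K).Nonempty) (hK0 : (0 : EuclideanSpace ℝ (Fin n)) ∈ K)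
    (hL_compact : IsCompact L) (hL_conv : Convex ℝ L)
    (hL_int : (interior L).Nonempty) (hL0 : (0 : EuclideanSpace ℝ (Fin n)) ∈ L)
    (C : Set (EuclideanSpace ℝ (Fin n) × EuclideanSpace ℝ (Fin n)))
    (hC : C = convexHull ℝ
      (K ×ˢ ({0} : Set (EuclideanSpace ℝ (Fin n))) ∪
       ({0} : Set (EuclideanSpace ℝ (Fin n))) ×ˢ L)) :
    C ∩ {p : EuclideanSpace ℝ (Fin n) × EuclideanSpace ℝ (Fin n) | p.1 = p.2}
      = (fun x => (x, x)) '' polarBody (polarBody K + polarBody L) := by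
  have hA_conv : Convex ℝ (K ×ˢ ({0} : Set (EuclideanSpace ℝ (Fin n)))) := hK_conv.prod (convex_singleton 0)
  have hB_conv : Convex ℝ (({0} : Set (EuclideanSpace ℝ (Fin n))) ×ˢ L) := (convex_singleton 0).prod hL_conv
  have hA_ne : (K ×ˢ ({0} : Set (EuclideanSpace ℝ (Fin n)))).Nonempty := ⟨(0, 0), hK0, rfl⟩
  have hB_ne : (({0} : Set (EuclideanSpace ℝ (Fin n))) ×ˢ L).Nonempty := ⟨(0, 0), rfl, hL0⟩
  have hCjoin : C = convexJoin ℝ (K ×ˢ ({0} : Set (EuclideanSpace ℝ (Fin n)))) (({0} : Set (EuclideanSpace ℝ (Fin n))) ×ˢ L) := by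
    rw [hC, hA_conv.convexHull_union hB_conv hA_ne hB_ne]
  ext p
  constructor
  · rintro ⟨hpC, hdiag⟩
    rw [hCjoin, mem_convexJoin] at hpC
    obtain ⟨q1, hq1, q2, hq2, hseg⟩ := hpC
    obtain ⟨s, t, hs, ht, hst, hp⟩ := hseg
    obtain ⟨hq1K, hq1z⟩ := hq1
    obtain ⟨hq2z, hq2L⟩ := hq2
    simp only [mem_singleton_iff] at hq1z hq2z
    have hdiag' : p.1 = p.2 := hdiag
    refine ⟨p.1, ?_, Prod.ext rfl hdiag'⟩
    intro w hw
    obtain ⟨u, hu, v, hv, rfl⟩ := hw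
    have hp1 : p.1 = s • q1.1 := by
      have := congrArg Prod.fst hp
      simp only [Prod.fst_add, Prod.smul_fst, hq2z] at this
      rw [← this]; simp
    have hp2 : p.2 = t • q2.2 := by
      have := congrArg Prod.snd hp
      simp only [Prod.snd_add, Prod.smul_snd, hq1z] at this
      rw [← this]; simp
    have hux : ⟪u, p.1⟫ ≤ s := by
      rw [hp1, real_inner_smul_right]
      have h1 : ⟪q1.1, u⟫ ≤ 1 := hu _ hq1K
      rw [real_inner_comm] at h1
      nlinarith
    have hvx : ⟪v, p.1⟫ ≤ t := by
      rw [hdiag', hp2, real_inner_smul_right]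
      have h1 : ⟪q2.2, v⟫ ≤ 1 := hv _ hq2L
      rw [real_inner_comm] at h1
      nlinarith
    have : ⟪u + v, p.1⟫ = ⟪u, p.1⟫ + ⟪v, p.1⟫ := inner_add_left u v p.1
    rw [this]
    linarith
  · rintro ⟨x, hx, rfl⟩
    simp only [mem_inter_iff, mem_setOf_eq]
    refine ⟨?_, by trivial⟩
    -- main work: exhibit (x, x) as a convex combination
    by_cases hx0 : x = 0
    · subst hx0
      rw [hC]
      have h00 : ((0, 0) : EuclideanSpace ℝ (Fin n) × EuclideanSpace ℝ (Fin n))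
          ∈ K ×ˢ ({0} : Set (EuclideanSpace ℝ (Fin n))) := ⟨hK0, rfl⟩
      simpa using subset_convexHull ℝ _ (Set.mem_union_left _ h00)
    -- suprema over the polar bodies
    set SK : Set ℝ := (fun u => ⟪u, x⟫) '' polarBody K with hSK
    set SL : Set ℝ := (fun u => ⟪u, x⟫) '' polarBody L with hSL
    have hSKne : SK.Nonempty := ⟨0, ⟨0, zero_mem_polarBody K, by simp⟩⟩
    have hSLne : SL.Nonempty := ⟨0, ⟨0, zero_mem_polarBody L, by simp⟩⟩
    have hsum : ∀ u ∈ polarBody K, ∀ v ∈ polarBody L, ⟪u, x⟫ + ⟪v, x⟫ ≤ 1 := by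
      intro u hu v hv
      have := hx (u + v) ⟨u, hu, v, hv, rfl⟩
      rwa [inner_add_left] at this
    have hSKbdd : BddAbove SK := by
      refine ⟨1, ?_⟩
      rintro _ ⟨u, hu, rfl⟩
      have := hsum u hu 0 (zero_mem_polarBody L)
      simpa using this
    have hSLbdd : BddAbove SL := by
      refine ⟨1, ?_⟩
      rintro _ ⟨v, hv, rfl⟩
      have := hsum 0 (zero_mem_polarBody K) v hv
      simpa using this
    set a : ℝ := sSup SK with ha
    set b : ℝ := sSup SL with hb
    have ha0 : 0 ≤ a := le_csSup hSKbdd ⟨0, zero_mem_polarBody K, by simp⟩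
    have hb0 : 0 ≤ b := le_csSup hSLbdd ⟨0, zero_mem_polarBody L, by simp⟩
    have hab : a + b ≤ 1 := by
      have h1 : a ≤ 1 - b := by
        apply csSup_le hSKne
        rintro _ ⟨u, hu, rfl⟩
        have h2 : b ≤ 1 - ⟪u, x⟫ := by
          apply csSup_le hSLne
          rintro _ ⟨v, hv, rfl⟩
          linarith [hsum u hu v hv]
        linarith
      linarith
    have HK : ∀ t, a < t → x ∈ t • K := by
      intro t hat
      by_contra hxt
      obtain ⟨u, hu, hut⟩ := polar_sep hK_conv hK_compact.isClosed hK0 (ha0.trans_lt hat) hxt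
      have : ⟪u, x⟫ ≤ a := le_csSup hSKbdd ⟨u, hu, rfl⟩
      linarith
    have HL : ∀ t, b < t → x ∈ t • L := by
      intro t hbt
      by_contra hxt
      obtain ⟨v, hv, hvt⟩ := polar_sep hL_conv hL_compact.isClosed hL0 (hb0.trans_lt hbt) hxt
      have : ⟪v, x⟫ ≤ b := le_csSup hSLbdd ⟨v, hv, rfl⟩
      linarith
    -- a > 0 since x ≠ 0 (K is bounded)
    have hapos : 0 < a := by
      rcases ha0.lt_or_eq with h | h
      · exact h
      · exfalso
        obtain ⟨M, hM⟩ := hK_compact.isBounded.exists_norm_le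
        have hMpos : 0 < max M 1 := lt_max_of_lt_right one_pos
        have key : ∀ t : ℝ, 0 < t → ‖x‖ ≤ t * max M 1 := by
          intro t ht
          obtain ⟨k, hk, hkx⟩ := HK t (h ▸ ht)
          rw [← hkx, norm_smul, Real.norm_eq_abs, abs_of_pos ht]
          have : ‖k‖ ≤ max M 1 := (hM k hk).trans (le_max_left _ _)
          nlinarith
        have hxn : 0 < ‖x‖ := norm_pos_iff.mpr hx0
        have := key (‖x‖ / (2 * max M 1)) (by positivity)
        have h2 : ‖x‖ / (2 * max M 1) * max M 1 = ‖x‖ / 2 := by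
          field_simp
        rw [h2] at this
        linarith
    have hbpos : 0 < b := by
      rcases hb0.lt_or_eq with h | h
      · exact h
      · exfalso
        obtain ⟨M, hM⟩ := hL_compact.isBounded.exists_norm_le
        have hMpos : 0 < max M 1 := lt_max_of_lt_right one_pos
        have key : ∀ t : ℝ, 0 < t → ‖x‖ ≤ t * max M 1 := by
          intro t ht
          obtain ⟨k, hk, hkx⟩ := HL t (h ▸ ht)
          rw [← hkx, norm_smul, Real.norm_eq_abs, abs_of_pos ht]
          have : ‖k‖ ≤ max M 1 := (hM k hk).trans (le_max_left _ _)
          nlinarith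
        have hxn : 0 < ‖x‖ := norm_pos_iff.mpr hx0
        have := key (‖x‖ / (2 * max M 1)) (by positivity)
        have h2 : ‖x‖ / (2 * max M 1) * max M 1 = ‖x‖ / 2 := by
          field_simp
        rw [h2] at this
        linarith
    -- choose λ = a / (a + b)
    have habpos : 0 < a + b := by linarith
    set lam : ℝ := a / (a + b) with hlam
    have hlam_pos : 0 < lam := by positivity
    have hlam_ge : a ≤ lam := by
      rw [hlam, le_div_iff₀ habpos]
      nlinarith
    have hlam_lt : lam < 1 := by
      rw [hlam, div_lt_one habpos]
      linarith
    have hcomp : 1 - lam = b / (a + b) := by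
      field_simp [hlam]
      rw [hlam, sub_mul, div_mul_cancel₀ _ habpos.ne']; ring
    have hcomp_pos : 0 < 1 - lam := by linarith
    have hcomp_ge : b ≤ 1 - lam := by
      rw [hcomp, le_div_iff₀ habpos]
      nlinarith
    have hxK : x ∈ lam • K :=
      mem_smul_of_forall_gt hK_compact.isClosed hlam_pos hlam_ge HK
    have hxL : x ∈ (1 - lam) • L :=
      mem_smul_of_forall_gt hL_compact.isClosed hcomp_pos hcomp_ge HL
    obtain ⟨k, hk, hkx⟩ := hxK
    obtain ⟨l, hl, hlx⟩ := hxL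
    rw [hCjoin, mem_convexJoin]
    refine ⟨(k, 0), ⟨hk, rfl⟩, (0, l), ⟨rfl, hl⟩, lam, 1 - lam, hlam_pos.le, hcomp_pos.le,
      by ring, ?_⟩
    apply Prod.ext <;> simp [hkx, hlx]
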